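/- In R^3 with the standard inner product, the vectors a = (1,0,0) and b = (1/2)(1, sqrt(2), 1) satisfy ⟨a|b⟩ = 1/sqrt(2), and the 26 triples of vectors C_1 through C_26 listed from the 37 vectors of Table I (after normalization) are each orthonormal bases of R^3. -/

import Mathlib

noncomputable def ev (u : Fin 3 → ℝ) : EuclideanSpace ℝ (Fin 3) := (WithLp.equiv 2 (Fin 3 → ℝ)).symm u

/-- The normalization of a vector of `ℝ^3`. -/
noncomputable def nv (u : Fin 3 → ℝ) : EuclideanSpace ℝ (Fin 3) := ‖ev u‖⁻¹ • ev u

/-- The (normalized) vectors `u, v, w` form an orthonormal basis of `ℝ^3`. -/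
def IsONB (u v w : Fin 3 → ℝ) : Prop :=
  Orthonormal ℝ ![nv u, nv v, nv w] ∧
  Submodule.span ℝ {nv u, nv v, nv w} = (⊤ : Submodule ℝ (EuclideanSpace ℝ (Fin 3)))

noncomputable def va : Fin 3 → ℝ := ![(1 : ℝ), (0 : ℝ), (0 : ℝ)]
noncomputable def vb : Fin 3 → ℝ := ![(Real.sqrt 2 : ℝ), (1 : ℝ), (1 : ℝ)]
noncomputable def v1 : Fin 3 → ℝ := ![(0 : ℝ), (1 : ℝ), (1 : ℝ)]
noncomputable def v2 : Fin 3 → ℝ := ![(0 : ℝ), (1 : ℝ), (-1 : ℝ)]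
noncomputable def v3 : Fin 3 → ℝ := ![(Real.sqrt 2 : ℝ), (-1 : ℝ), (-1 : ℝ)]
noncomputable def v4 : Fin 3 → ℝ := ![(0 : ℝ), (0 : ℝ), (1 : ℝ)]
noncomputable def v5 : Fin 3 → ℝ := ![(0 : ℝ), (1 : ℝ), (0 : ℝ)]
noncomputable def v6 : Fin 3 → ℝ := ![(Real.sqrt 2 : ℝ), (1 : ℝ), (-3 : ℝ)]
noncomputable def v7 : Fin 3 → ℝ := ![(1 : ℝ), (-Real.sqrt 2 : ℝ), (0 : ℝ)]
noncomputable def v8 : Fin 3 → ℝ := ![(Real.sqrt 2 : ℝ), (-3 : ℝ), (1 : ℝ)]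
noncomputable def v9 : Fin 3 → ℝ := ![(1 : ℝ), (0 : ℝ), (-Real.sqrt 2 : ℝ)]
noncomputable def v10 : Fin 3 → ℝ := ![(Real.sqrt 2 : ℝ), (1 : ℝ), (0 : ℝ)]
noncomputable def v11 : Fin 3 → ℝ := ![(Real.sqrt 2 : ℝ), (0 : ℝ), (1 : ℝ)]
noncomputable def v12 : Fin 3 → ℝ := ![(Real.sqrt 2 : ℝ), (-2 : ℝ), (-3 : ℝ)]
noncomputable def v13 : Fin 3 → ℝ := ![(1 : ℝ), (-Real.sqrt 2 : ℝ), (Real.sqrt 2 : ℝ)]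
noncomputable def v14 : Fin 3 → ℝ := ![(Real.sqrt 2 : ℝ), (-3 : ℝ), (-2 : ℝ)]
noncomputable def v15 : Fin 3 → ℝ := ![(1 : ℝ), (Real.sqrt 2 : ℝ), (-Real.sqrt 2 : ℝ)]
noncomputable def v16 : Fin 3 → ℝ := ![(Real.sqrt 8 : ℝ), (1 : ℝ), (-1 : ℝ)]
noncomputable def v17 : Fin 3 → ℝ := ![(Real.sqrt 8 : ℝ), (-1 : ℝ), (1 : ℝ)]
noncomputable def v18 : Fin 3 → ℝ := ![(Real.sqrt 2 : ℝ), (-7 : ℝ), (-3 : ℝ)]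
noncomputable def v19 : Fin 3 → ℝ := ![(Real.sqrt 2 : ℝ), (-1 : ℝ), (3 : ℝ)]
noncomputable def v20 : Fin 3 → ℝ := ![(Real.sqrt 2 : ℝ), (-3 : ℝ), (-7 : ℝ)]
noncomputable def v21 : Fin 3 → ℝ := ![(Real.sqrt 2 : ℝ), (3 : ℝ), (-1 : ℝ)]
noncomputable def v22 : Fin 3 → ℝ := ![(1 : ℝ), (Real.sqrt 2 : ℝ), (0 : ℝ)]
noncomputable def v23 : Fin 3 → ℝ := ![(1 : ℝ), (0 : ℝ), (Real.sqrt 2 : ℝ)]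
noncomputable def v24 : Fin 3 → ℝ := ![(Real.sqrt 2 : ℝ), (-1 : ℝ), (-3 : ℝ)]
noncomputable def v25 : Fin 3 → ℝ := ![(Real.sqrt 2 : ℝ), (-1 : ℝ), (1 : ℝ)]
noncomputable def v26 : Fin 3 → ℝ := ![(Real.sqrt 2 : ℝ), (-3 : ℝ), (-1 : ℝ)]
noncomputable def v27 : Fin 3 → ℝ := ![(Real.sqrt 2 : ℝ), (1 : ℝ), (-1 : ℝ)]
noncomputable def v28 : Fin 3 → ℝ := ![(Real.sqrt 2 : ℝ), (-1 : ℝ), (0 : ℝ)]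
noncomputable def v29 : Fin 3 → ℝ := ![(Real.sqrt 2 : ℝ), (0 : ℝ), (-1 : ℝ)]
noncomputable def v30 : Fin 3 → ℝ := ![(Real.sqrt 2 : ℝ), (2 : ℝ), (3 : ℝ)]
noncomputable def v31 : Fin 3 → ℝ := ![(Real.sqrt 2 : ℝ), (3 : ℝ), (2 : ℝ)]
noncomputable def v32 : Fin 3 → ℝ := ![(Real.sqrt 2 : ℝ), (3 : ℝ), (7 : ℝ)]
noncomputable def v33 : Fin 3 → ℝ := ![(Real.sqrt 2 : ℝ), (7 : ℝ), (3 : ℝ)]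
noncomputable def v34 : Fin 3 → ℝ := ![(Real.sqrt 2 : ℝ), (1 : ℝ), (3 : ℝ)]
noncomputable def v35 : Fin 3 → ℝ := ![(Real.sqrt 2 : ℝ), (3 : ℝ), (1 : ℝ)]

lemma nv_inner_self (u : Fin 3 → ℝ) (h : (inner ℝ (ev u) (ev u) : ℝ) ≠ 0) :
    (inner ℝ (nv u) (nv u) : ℝ) = 1 := by
  have hne : ev u ≠ 0 := fun h0 => h (by simp [h0])
  have hn : ‖ev u‖ ≠ 0 := norm_ne_zero_iff.mpr hne
  rw [nv, real_inner_smul_left, real_inner_smul_right, real_inner_self_eq_norm_sq, pow_two]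
  field_simp

lemma nv_inner_zero (u v : Fin 3 → ℝ) (h : (inner ℝ (ev u) (ev v) : ℝ) = 0) :
    (inner ℝ (nv u) (nv v) : ℝ) = 0 := by
  simp only [nv, real_inner_smul_left, real_inner_smul_right, h, mul_zero]

lemma isONB_aux (u v w : Fin 3 → ℝ)
    (huu : (inner ℝ (ev u) (ev u) : ℝ) ≠ 0)
    (hvv : (inner ℝ (ev v) (ev v) : ℝ) ≠ 0)
    (hww : (inner ℝ (ev w) (ev w) : ℝ) ≠ 0)
    (huv : (inner ℝ (ev u) (ev v) : ℝ) = 0)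
    (huw : (inner ℝ (ev u) (ev w) : ℝ) = 0)
    (hvw : (inner ℝ (ev v) (ev w) : ℝ) = 0) : IsONB u v w := by
  have hvu : (inner ℝ (ev v) (ev u) : ℝ) = 0 := real_inner_comm (ev u) (ev v) ▸ huv
  have hwu : (inner ℝ (ev w) (ev u) : ℝ) = 0 := real_inner_comm (ev u) (ev w) ▸ huw
  have hwv : (inner ℝ (ev w) (ev v) : ℝ) = 0 := real_inner_comm (ev v) (ev w) ▸ hvw
  have hon : Orthonormal ℝ ![nv u, nv v, nv w] := by
    rw [orthonormal_iff_ite]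
    intro i j
    fin_cases i <;> fin_cases j <;>
      simp only [Matrix.cons_val_zero, Matrix.cons_val_one, Matrix.head_cons,
        Matrix.cons_val_two, Matrix.tail_cons, Fin.mk_zero, Fin.mk_one, Fin.isValue,
        Fin.mk.injEq, reduceIte] <;>
      first
        | exact nv_inner_self u huu | exact nv_inner_self v hvv | exact nv_inner_self w hww
        | exact nv_inner_zero _ _ huv | exact nv_inner_zero _ _ huw
        | exact nv_inner_zero _ _ hvw | exact nv_inner_zero _ _ hvu
        | exact nv_inner_zero _ _ hwu | exact nv_inner_zero _ _ hwv
  refine ⟨hon, ?_⟩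
  have hli := hon.linearIndependent
  have hset : ({nv u, nv v, nv w} : Set (EuclideanSpace ℝ (Fin 3))) = Set.range ![nv u, nv v, nv w] := by
    ext x
    simp [Matrix.range_cons, Matrix.range_empty]
    tauto
  rw [hset]
  apply LinearIndependent.span_eq_top_of_card_eq_finrank hli
  simp [finrank_euclideanSpace]

theorem table_contexts_orthonormal :
    (inner ℝ (nv va) (nv vb) : ℝ) = 1 / Real.sqrt 2 ∧
    IsONB va v1 v2 ∧
    IsONB va v4 v5 ∧
    IsONB vb v2 v3 ∧
    IsONB vb v6 v7 ∧
    IsONB vb v8 v9 ∧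
    IsONB v4 v7 v10 ∧
    IsONB v5 v9 v11 ∧
    IsONB v10 v12 v13 ∧
    IsONB v11 v14 v15 ∧
    IsONB v1 v13 v16 ∧
    IsONB v1 v15 v17 ∧
    IsONB v16 v18 v19 ∧
    IsONB v17 v20 v21 ∧
    IsONB v3 v19 v22 ∧
    IsONB v3 v21 v23 ∧
    IsONB v22 v24 v25 ∧
    IsONB v23 v26 v27 ∧
    IsONB v4 v22 v28 ∧
    IsONB v5 v23 v29 ∧
    IsONB v15 v28 v30 ∧
    IsONB v13 v29 v31 ∧
    IsONB v8 v16 v32 ∧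
    IsONB v6 v17 v33 ∧
    IsONB v7 v27 v34 ∧
    IsONB v9 v25 v35 ∧
    IsONB v1 v25 v27 := by
  have h2 : Real.sqrt 2 * Real.sqrt 2 = 2 := Real.mul_self_sqrt (by norm_num)
  have h2' : Real.sqrt 2 ^ 2 = 2 := Real.sq_sqrt (by norm_num)
  have h8 : Real.sqrt 8 = 2 * Real.sqrt 2 := by
    rw [show (8:ℝ) = 2^2 * 2 by norm_num, Real.sqrt_mul (by positivity), Real.sqrt_sq (by norm_num)]
  have hs0 : Real.sqrt 2 ≠ 0 := by positivity
  refine ⟨?_, ?_, ?_, ?_, ?_, ?_, ?_, ?_, ?_, ?_, ?_, ?_, ?_, ?_, ?_, ?_, ?_, ?_, ?_, ?_, ?_, ?_, ?_, ?_, ?_, ?_, ?_⟩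
  · have ia : (inner ℝ (ev va) (ev va) : ℝ) = 1 := by
      norm_num [ev, PiLp.inner_apply, Fin.sum_univ_three, RCLike.inner_apply,
        WithLp.equiv_symm_apply, PiLp.toLp_apply, Matrix.cons_val_two, Matrix.tail_cons, Matrix.head_cons, EuclideanSpace.norm_sq_eq, va]
    have ib : (inner ℝ (ev vb) (ev vb) : ℝ) = 4 := by
      norm_num [ev, PiLp.inner_apply, Fin.sum_univ_three, RCLike.inner_apply,
        WithLp.equiv_symm_apply, PiLp.toLp_apply, Matrix.cons_val_two, Matrix.tail_cons, Matrix.head_cons, EuclideanSpace.norm_sq_eq, vb]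
    have iab : (inner ℝ (ev va) (ev vb) : ℝ) = Real.sqrt 2 := by
      norm_num [ev, PiLp.inner_apply, Fin.sum_univ_three, RCLike.inner_apply,
        WithLp.equiv_symm_apply, PiLp.toLp_apply, Matrix.cons_val_two, Matrix.tail_cons, Matrix.head_cons, EuclideanSpace.norm_sq_eq, va, vb]
    have na : ‖ev va‖ = 1 := by
      have := real_inner_self_eq_norm_sq (ev va)
      rw [ia] at this
      nlinarith [norm_nonneg (ev va)]
    have nb : ‖ev vb‖ = 2 := by
      have := real_inner_self_eq_norm_sq (ev vb)
      rw [ib] at this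
      nlinarith [norm_nonneg (ev vb)]
    rw [nv, nv, real_inner_smul_left, real_inner_smul_right, iab, na, nb]
    field_simp
    exact h2'
  all_goals (
    apply isONB_aux <;>
      norm_num [ev, PiLp.inner_apply, Fin.sum_univ_three, RCLike.inner_apply,
        WithLp.equiv_symm_apply, PiLp.toLp_apply, Matrix.cons_val_two, Matrix.tail_cons, Matrix.head_cons, EuclideanSpace.norm_sq_eq, h8, va, vb, v1, v2, v3, v4, v5, v6, v7, v8, v9, v10, v11, v12, v13, v14, v15, v16, v17, v18, v19, v20, v21, v22, v23, v24, v25, v26, v27, v28, v29, v30, v31, v32, v33, v34, v35] <;>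
      first | positivity | nlinarith [h2, h2'])
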